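/- The smallest nonzero eigenvalue of the discrete operator D^T D acting on mean-zero 2N-periodic sequences equals (2 sin(πh/2)/h)^2, where (Dv)_j = (v_j - v_{j-1})/h and h = 1/N. -/

import Mathlib

open Complex Finset

namespace DTD

noncomputable def om (N : ℤ) : ℂ := Complex.exp (Real.pi * Complex.I / N)

variable {N : ℤ}

lemma om_ne_zero (N : ℤ) : om N ≠ 0 := Complex.exp_ne_zero _

lemma om_zpow (N : ℤ) (m : ℤ) : om N ^ m = Complex.exp (m * (Real.pi * Complex.I / N)) := by
  rw [om, Complex.exp_int_mul]

lemma om_pow_two_N (hN : 1 ≤ N) : om N ^ (2 * N) = 1 := by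
  rw [om_zpow]
  have hN0 : (N : ℂ) ≠ 0 := by
    exact_mod_cast (by omega : N ≠ 0)
  have : ((2 * N : ℤ) : ℂ) * (Real.pi * Complex.I / N) = 2 * Real.pi * Complex.I := by
    push_cast
    field_simp
  rw [this, Complex.exp_two_pi_mul_I]

lemma om_zpow_ne_one (hN : 1 ≤ N) {m : ℤ} (hm : ¬ (2 * N ∣ m)) : om N ^ m ≠ 1 := by
  rw [om_zpow]
  intro hc
  rw [Complex.exp_eq_one_iff] at hc
  obtain ⟨n, hn⟩ := hc
  have hN0 : (N : ℂ) ≠ 0 := by exact_mod_cast (by omega : N ≠ 0)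
  have hpi : (Real.pi : ℂ) ≠ 0 := by exact_mod_cast Real.pi_ne_zero
  have hI : Complex.I ≠ 0 := Complex.I_ne_zero
  have : (m : ℂ) = 2 * N * n := by
    have key : (m : ℂ) * (Real.pi * Complex.I) = (2 * N * n) * (Real.pi * Complex.I) := by
      field_simp at hn
      linear_combination (↑Real.pi * Complex.I) * hn
    exact mul_right_cancel₀ (mul_ne_zero hpi hI) key
  have : m = 2 * N * n := by exact_mod_cast this
  exact hm ⟨n, this⟩

end DTD

namespace DTD
variable {N : ℤ}

lemma sum_om_zpow (hN : 1 ≤ N) {m : ℤ} (hm : ¬ (2 * N ∣ m)) :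
    ∑ k ∈ Icc (-N + 1) N, om N ^ (m * k) = 0 := by
  set z : ℂ := om N ^ m with hz
  have hz0 : z ≠ 0 := zpow_ne_zero _ (om_ne_zero N)
  have hz1 : z ≠ 1 := om_zpow_ne_one hN hm
  have hzper : z ^ (2 * N).toNat = 1 := by
    have : z ^ (2 * N) = 1 := by
      rw [hz, ← zpow_mul, mul_comm m (2*N), zpow_mul, om_pow_two_N hN, one_zpow]
    rw [← this, ← zpow_natCast, Int.toNat_of_nonneg (by omega)]
  have step : ∀ k, om N ^ (m * k) = z ^ k := fun k => by rw [hz, ← zpow_mul]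
  calc ∑ k ∈ Icc (-N + 1) N, om N ^ (m * k)
      = ∑ t ∈ Finset.range (2 * N).toNat, z ^ (-N + 1 : ℤ) * z ^ t := by
        refine Finset.sum_nbij' (fun k => (k + N - 1).toNat) (fun t => (t : ℤ) - N + 1)
          ?_ ?_ ?_ ?_ ?_
        · intro a ha
          simp only [Finset.mem_Icc] at ha
          simp only [Finset.mem_range]
          omega
        · intro a ha
          simp only [Finset.mem_range] at ha
          simp only [Finset.mem_Icc]
          omega
        · intro a ha; simp only [Finset.mem_Icc] at ha; omega
        · intro a ha; simp only [Finset.mem_range] at ha; omega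
        · intro a ha
          simp only [Finset.mem_Icc] at ha
          rw [step, ← zpow_natCast z, ← zpow_add₀ hz0]
          congr 1
          omega
  _ = 0 := by
        rw [← Finset.mul_sum, geom_sum_eq hz1, hzper]
        simp

lemma card_I (hN : 1 ≤ N) : (Icc (-N + 1) N).card = (2 * N).toNat := by
  rw [Int.card_Icc]; congr 1; omega

lemma sum_om_delta (hN : 1 ≤ N) {m : ℤ} (hm : -(2*N) < m) (hm' : m < 2*N) :
    ∑ k ∈ Icc (-N + 1) N, om N ^ (m * k) = if m = 0 then ((2*N : ℤ) : ℂ) else 0 := by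
  by_cases h0 : m = 0
  · subst h0
    simp only [if_pos rfl, zero_mul, zpow_zero, Finset.sum_const, card_I hN, nsmul_eq_mul,
      mul_one]
    rw [show ((2*N:ℤ):ℂ) = (((2*N).toNat : ℤ) : ℂ) by congr 1; omega]
    norm_cast
  · rw [if_neg h0]
    refine sum_om_zpow hN ?_
    rintro ⟨c, rfl⟩
    rcases lt_trichotomy c 0 with hc | hc | hc
    · nlinarith
    · subst hc; simp at h0
    · nlinarith

lemma conj_om_zpow (m : ℤ) : (starRingEnd ℂ) (om N ^ m) = om N ^ (-m) := by
  rw [om_zpow, om_zpow, ← Complex.exp_conj]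
  congr 1
  simp [map_mul, map_div₀, Complex.conj_I]
  ring

noncomputable def Ft (N : ℤ) (u : ℤ → ℝ) (k : ℤ) : ℂ :=
  ∑ j ∈ Icc (-N + 1) N, (u j : ℂ) * om N ^ (k * j)

lemma parseval_complex (hN : 1 ≤ N) (u : ℤ → ℝ) :
    ∑ k ∈ Icc (-N + 1) N, Ft N u k * (starRingEnd ℂ) (Ft N u k)
      = ((2*N : ℤ) : ℂ) * ∑ j ∈ Icc (-N + 1) N, ((u j : ℂ))^2 := by
  have key : ∀ k ∈ Icc (-N + 1) N, Ft N u k * (starRingEnd ℂ) (Ft N u k)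
      = ∑ j ∈ Icc (-N + 1) N, ∑ l ∈ Icc (-N + 1) N,
          ((u j : ℂ) * u l) * om N ^ ((j - l) * k) := by
    intro k _
    rw [Ft, map_sum, Finset.sum_mul_sum]
    refine Finset.sum_congr rfl fun j _ => Finset.sum_congr rfl fun l _ => ?_
    rw [map_mul, Complex.conj_ofReal, conj_om_zpow]
    rw [mul_mul_mul_comm, ← zpow_add₀ (om_ne_zero N)]
    congr 2
    ring
  rw [Finset.sum_congr rfl key, Finset.sum_comm]
  have swap2 : ∀ j ∈ Icc (-N + 1) N,
      (∑ k ∈ Icc (-N + 1) N, ∑ l ∈ Icc (-N + 1) N, ((u j : ℂ) * u l) * om N ^ ((j - l) * k))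
      = ∑ l ∈ Icc (-N + 1) N, ((u j : ℂ) * u l) *
          ∑ k ∈ Icc (-N + 1) N, om N ^ ((j - l) * k) := by
    intro j _
    rw [Finset.sum_comm]
    exact Finset.sum_congr rfl fun l _ => (Finset.mul_sum _ _ _).symm
  rw [Finset.sum_congr rfl swap2]
  rw [Finset.mul_sum]
  refine Finset.sum_congr rfl fun j hj => ?_
  simp only [Finset.mem_Icc] at hj
  have inner : ∀ l ∈ Icc (-N + 1) N, ((u j : ℂ) * u l) *
      (∑ k ∈ Icc (-N + 1) N, om N ^ ((j - l) * k))
      = if l = j then ((u j : ℂ) * u l) * ((2*N : ℤ) : ℂ) else 0 := by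
    intro l hl
    simp only [Finset.mem_Icc] at hl
    rw [sum_om_delta hN (by omega) (by omega)]
    by_cases hlj : l = j
    · subst hlj; simp
    · rw [if_neg (by omega), if_neg hlj, mul_zero]
  rw [Finset.sum_congr rfl inner, Finset.sum_ite_eq' (Icc (-N+1) N) j (fun l => (u j : ℂ) * u l * ((2*N:ℤ):ℂ))]
  rw [if_pos (by simp only [Finset.mem_Icc]; omega)]
  ring

lemma parseval (hN : 1 ≤ N) (u : ℤ → ℝ) :
    ∑ k ∈ Icc (-N + 1) N, Complex.normSq (Ft N u k)
      = (2*N : ℝ) * ∑ j ∈ Icc (-N + 1) N, (u j)^2 := by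
  have := parseval_complex hN u
  have lhs : ∑ k ∈ Icc (-N + 1) N, Ft N u k * (starRingEnd ℂ) (Ft N u k)
      = ((∑ k ∈ Icc (-N + 1) N, Complex.normSq (Ft N u k) : ℝ) : ℂ) := by
    push_cast
    exact Finset.sum_congr rfl fun k _ => Complex.mul_conj _
  rw [lhs] at this
  have rhs : ((2*N : ℤ) : ℂ) * ∑ j ∈ Icc (-N + 1) N, ((u j : ℂ))^2
      = (((2*N : ℝ) * ∑ j ∈ Icc (-N + 1) N, (u j)^2 : ℝ) : ℂ) := by push_cast; ring
  rw [rhs] at this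
  exact_mod_cast this

lemma sum_shift (hN : 1 ≤ N) (f : ℤ → ℂ) (hf : ∀ j, f (j + 2 * N) = f j) :
    ∑ j ∈ Icc (-N + 1) N, f (j - 1) = ∑ j ∈ Icc (-N + 1) N, f j := by
  have reindex : ∑ j ∈ Icc (-N + 1) N, f (j - 1) = ∑ j ∈ Icc (-N) (N - 1), f j := by
    refine Finset.sum_nbij' (fun k => k - 1) (fun k => k + 1) ?_ ?_ ?_ ?_ ?_ <;>
      intro a ha <;> simp only [Finset.mem_Icc] at * <;> omega
  have e1 : Icc (-N) (N - 1) = insert (-N) (Icc (-N + 1) (N - 1)) := by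
    ext x
    simp only [Finset.mem_Icc, Finset.mem_insert]
    omega
  have e2 : Icc (-N + 1) N = insert N (Icc (-N + 1) (N - 1)) := by
    ext x
    simp only [Finset.mem_Icc, Finset.mem_insert]
    omega
  have hfN : f (-N) = f N := by
    have := hf (-N)
    rw [show -N + 2 * N = N by ring] at this
    exact this.symm
  rw [reindex, e1, e2, Finset.sum_insert (by simp only [Finset.mem_Icc]; omega),
    Finset.sum_insert (by simp only [Finset.mem_Icc]; omega), hfN]

lemma om_zpow_two_N_mul (hN : 1 ≤ N) (c : ℤ) : om N ^ (2 * N * c) = 1 := by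
  rw [zpow_mul, om_pow_two_N hN, one_zpow]

lemma Ft_diff (hN : 1 ≤ N) (v : ℤ → ℝ) (hv : ∀ j, v (j + 2 * N) = v j) (k : ℤ) :
    Ft N (fun j => v j - v (j - 1)) k = (1 - om N ^ k) * Ft N v k := by
  have hper : ∀ j : ℤ, (v (j + 2 * N) : ℂ) * om N ^ (k * (j + 2 * N))
      = (v j : ℂ) * om N ^ (k * j) := by
    intro j
    rw [hv, show k * (j + 2 * N) = k * j + 2 * N * k by ring,
      zpow_add₀ (om_ne_zero N), om_zpow_two_N_mul hN, mul_one]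
  have shift : ∑ j ∈ Icc (-N + 1) N, (v (j - 1) : ℂ) * om N ^ (k * (j - 1))
      = Ft N v k := by
    exact sum_shift hN (fun j => (v j : ℂ) * om N ^ (k * j)) hper
  have expand : ∀ j : ℤ, ((v j - v (j - 1) : ℝ) : ℂ) * om N ^ (k * j)
      = (v j : ℂ) * om N ^ (k * j) - ((v (j - 1) : ℂ) * om N ^ (k * (j - 1))) * om N ^ k := by
    intro j
    push_cast
    rw [mul_assoc, ← zpow_add₀ (om_ne_zero N), show k * (j - 1) + k = k * j by ring]
    ring
  rw [Ft]
  simp only [expand]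
  rw [Finset.sum_sub_distrib, ← Finset.sum_mul, shift]
  rw [Ft]
  ring

lemma normSq_one_sub_om (hN : 1 ≤ N) (k : ℤ) :
    Complex.normSq (1 - om N ^ k) = 4 * Real.sin (k * Real.pi / (2 * N)) ^ 2 := by
  have hN0 : (N : ℝ) ≠ 0 := by exact_mod_cast (by omega : N ≠ 0)
  set θ : ℝ := k * Real.pi / N with hθ
  have hok : om N ^ k = Complex.exp ((θ : ℂ) * Complex.I) := by
    rw [om_zpow, hθ]
    congr 1
    push_cast
    field_simp
  rw [hok, Complex.exp_mul_I]
  have hre : (1 - (Complex.cos θ + Complex.sin θ * Complex.I)).re = 1 - Real.cos θ := by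
    simp [Complex.cos_ofReal_re, Complex.sin_ofReal_re]
  have him : (1 - (Complex.cos θ + Complex.sin θ * Complex.I)).im = -Real.sin θ := by
    simp [Complex.cos_ofReal_im, Complex.sin_ofReal_im, Complex.sin_ofReal_re]
  rw [Complex.normSq_apply, hre, him]
  have harg : θ / 2 = k * Real.pi / (2 * N) := by rw [hθ]; ring
  have hcos : Real.cos θ = 1 - 2 * Real.sin (θ / 2) ^ 2 := by
    rw [show θ = 2 * (θ / 2) by ring, Real.cos_two_mul']
    rw [show 2 * (θ / 2) / 2 = θ / 2 by ring]
    have := Real.sin_sq_add_cos_sq (θ / 2)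
    linarith
  have hsin := Real.sin_sq_add_cos_sq θ
  rw [← harg]
  nlinarith [hcos, hsin]

lemma sin_sq_mono (hN : 1 ≤ N) {k : ℤ} (hk1 : -N + 1 ≤ k) (hk2 : k ≤ N) (hk0 : k ≠ 0) :
    Real.sin (Real.pi / (2 * N)) ^ 2 ≤ Real.sin (k * Real.pi / (2 * N)) ^ 2 := by
  have hNpos : (0 : ℝ) < N := by exact_mod_cast (by omega : (0:ℤ) < N)
  have habs : Real.sin (k * Real.pi / (2 * N)) ^ 2
      = Real.sin (|k| * Real.pi / (2 * N)) ^ 2 := by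
    rcases abs_cases k with ⟨he, _⟩ | ⟨he, _⟩
    · rw [he]
    · rw [he]
      push_cast
      rw [show (-(k:ℝ)) * Real.pi / (2 * N) = -((k:ℝ) * Real.pi / (2 * N)) by ring,
        Real.sin_neg]
      ring
  rw [habs]
  have hkk : (1:ℤ) ≤ |k| ∧ |k| ≤ N := by
    rcases abs_cases k with ⟨he, _⟩ | ⟨he, _⟩ <;> omega
  have h1' : (1 : ℝ) ≤ ((|k| : ℤ) : ℝ) := by exact_mod_cast hkk.1
  have hkN : ((|k| : ℤ) : ℝ) ≤ (N : ℝ) := by exact_mod_cast hkk.2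
  set a := Real.pi / (2 * N) with ha
  set b := ((|k| : ℤ) : ℝ) * Real.pi / (2 * N) with hb
  have hapos : 0 < a := by positivity
  have key1 : 1 * (Real.pi / (2 * (N:ℝ))) ≤ ((|k|:ℤ):ℝ) * (Real.pi / (2 * N)) :=
    mul_le_mul_of_nonneg_right h1' (by positivity)
  have key2 : ((|k|:ℤ):ℝ) * (Real.pi / (2 * N)) ≤ (N:ℝ) * (Real.pi / (2 * N)) :=
    mul_le_mul_of_nonneg_right hkN (by positivity)
  have hNhalf : (N:ℝ) * (Real.pi / (2 * N)) = Real.pi / 2 := by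
    field_simp
  have hb' : b = ((|k|:ℤ):ℝ) * (Real.pi / (2 * N)) := by rw [hb]; ring
  have hab : a ≤ b := by rw [ha, hb']; linarith
  have hbhalf : b ≤ Real.pi / 2 := by rw [hb']; linarith
  have hs : Real.sin a ≤ Real.sin b :=
    Real.sin_le_sin_of_le_of_le_pi_div_two (by linarith [Real.pi_pos]) hbhalf hab
  have hsa : 0 ≤ Real.sin a := Real.sin_nonneg_of_nonneg_of_le_pi (le_of_lt hapos)
    (by linarith [Real.pi_pos])
  nlinarith [hs, hsa]

/-- Core sharp discrete Wirtinger inequality. -/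
lemma core_ineq (hN : 1 ≤ N) (v : ℤ → ℝ) (hv : ∀ j, v (j + 2 * N) = v j)
    (hmean : ∑ j ∈ Icc (-N + 1) N, v j = 0) :
    4 * Real.sin (Real.pi / (2 * N)) ^ 2 * ∑ j ∈ Icc (-N + 1) N, (v j) ^ 2
      ≤ ∑ j ∈ Icc (-N + 1) N, (v j - v (j - 1)) ^ 2 := by
  have hNpos : (0 : ℝ) < N := by exact_mod_cast (by omega : (0:ℤ) < N)
  set d : ℤ → ℝ := fun j => v j - v (j - 1) with hd
  have hP0 : Ft N v 0 = 0 := by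
    rw [Ft]
    simp only [zero_mul, zpow_zero, mul_one]
    exact_mod_cast congrArg (fun x : ℝ => (x : ℂ)) hmean
  have hFd : ∀ k : ℤ, Complex.normSq (Ft N d k)
      = 4 * Real.sin (k * Real.pi / (2 * N)) ^ 2 * Complex.normSq (Ft N v k) := by
    intro k
    rw [hd, Ft_diff hN v hv k, Complex.normSq_mul, normSq_one_sub_om hN k]
  have pv := parseval hN v
  have pd := parseval hN d
  have pointwise : ∀ k ∈ Icc (-N + 1) N,
      4 * Real.sin (Real.pi / (2 * N)) ^ 2 * Complex.normSq (Ft N v k)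
        ≤ Complex.normSq (Ft N d k) := by
    intro k hk
    simp only [Finset.mem_Icc] at hk
    rw [hFd k]
    by_cases hk0 : k = 0
    · subst hk0
      rw [hP0]
      simp
    · have := sin_sq_mono hN hk.1 hk.2 hk0
      have hnn := Complex.normSq_nonneg (Ft N v k)
      nlinarith
  have sum_le := Finset.sum_le_sum pointwise
  rw [← Finset.mul_sum] at sum_le
  rw [pv, pd] at sum_le
  have h2N : (0:ℝ) < 2 * N := by linarith
  nlinarith [sum_le]

lemma sum_om_full (hN : 1 ≤ N) (m : ℤ) :
    ∑ k ∈ Icc (-N + 1) N, om N ^ (m * k)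
      = if (2 * N) ∣ m then ((2 * N : ℤ) : ℂ) else 0 := by
  by_cases hd : (2 * N) ∣ m
  · rw [if_pos hd]
    obtain ⟨c, rfl⟩ := hd
    have : ∀ k ∈ Icc (-N + 1) N, om N ^ (2 * N * c * k) = 1 := by
      intro k _
      rw [show 2 * N * c * k = 2 * N * (c * k) by ring, om_zpow_two_N_mul hN]
    rw [Finset.sum_congr rfl this, Finset.sum_const, card_I hN]
    rw [show ((2*N:ℤ):ℂ) = (((2*N).toNat : ℤ) : ℂ) by congr 1; omega]
    norm_cast
    simp
  · rw [if_neg hd]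
    exact sum_om_zpow hN hd

lemma dvd_bound (hN : 1 ≤ N) {m : ℤ} (hd : 2 * N ∣ m) (h1 : -(2 * N) < m) (h2 : m < 2 * N) :
    m = 0 := by
  obtain ⟨c, rfl⟩ := hd
  rcases lt_trichotomy c 0 with hc | hc | hc
  · nlinarith
  · simp [hc]
  · nlinarith

lemma cos_eq_om (hN : 1 ≤ N) (j : ℤ) :
    ((Real.cos (Real.pi * j / N) : ℝ) : ℂ) = (om N ^ j + om N ^ (-j)) / 2 := by
  have hN0 : (N : ℝ) ≠ 0 := by exact_mod_cast (by omega : N ≠ 0)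
  have h1 : om N ^ j = Complex.exp (((Real.pi * j / N : ℝ) : ℂ) * Complex.I) := by
    rw [om_zpow]
    congr 1
    push_cast
    field_simp
  have h2 : om N ^ (-j) = Complex.exp (-((Real.pi * j / N : ℝ) : ℂ) * Complex.I) := by
    rw [om_zpow]
    congr 1
    push_cast
    field_simp
  rw [h1, h2, ← Complex.two_cos, Complex.ofReal_cos]
  ring

/-- The witness sequence. -/
noncomputable def wit (N : ℤ) : ℤ → ℝ := fun j => Real.cos (Real.pi * j / N)

lemma wit_per (hN : 1 ≤ N) : ∀ j : ℤ, wit N (j + 2 * N) = wit N j := by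
  intro j
  have hN0 : (N : ℝ) ≠ 0 := by exact_mod_cast (by omega : N ≠ 0)
  rw [wit, wit]
  have : Real.pi * ((j : ℝ) + 2 * N) / N = Real.pi * j / N + 2 * Real.pi := by
    field_simp
  rw [show ((j + 2 * N : ℤ) : ℝ) = (j : ℝ) + 2 * N by push_cast; ring, this,
    Real.cos_add_two_pi]

lemma Ft_wit (hN : 1 ≤ N) (k : ℤ) :
    Ft N (wit N) k = ((if 2 * N ∣ (k + 1) then ((2 * N : ℤ) : ℂ) else 0)
      + (if 2 * N ∣ (k - 1) then ((2 * N : ℤ) : ℂ) else 0)) / 2 := by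
  have expand : ∀ j ∈ Icc (-N + 1) N, ((wit N j : ℝ) : ℂ) * om N ^ (k * j)
      = (om N ^ ((k + 1) * j) + om N ^ ((k - 1) * j)) / 2 := by
    intro j _
    rw [wit, cos_eq_om hN j]
    rw [div_mul_eq_mul_div, add_mul, ← zpow_add₀ (om_ne_zero N), ← zpow_add₀ (om_ne_zero N)]
    congr 3 <;> ring
  rw [Ft, Finset.sum_congr rfl expand, ← Finset.sum_div, Finset.sum_add_distrib,
    sum_om_full hN (k + 1), sum_om_full hN (k - 1)]

lemma Ft_wit_zero (hN : 1 ≤ N) {k : ℤ} (hk1 : -N + 1 ≤ k) (hk2 : k ≤ N)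
    (h1 : k ≠ 1) (h2 : k ≠ -1) : Ft N (wit N) k = 0 := by
  rw [Ft_wit hN k]
  rw [if_neg, if_neg]
  · norm_num
  · intro hd
    have := dvd_bound hN hd (by omega) (by omega)
    omega
  · intro hd
    have := dvd_bound hN hd (by omega) (by omega)
    omega

lemma wit_mean (hN : 1 ≤ N) : ∑ j ∈ Icc (-N + 1) N, wit N j = 0 := by
  have h0 : Ft N (wit N) 0 = 0 := Ft_wit_zero hN (by omega) (by omega) (by omega) (by omega)
  have : (∑ j ∈ Icc (-N + 1) N, ((wit N j : ℝ) : ℂ)) = 0 := by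
    rw [← h0, Ft]
    exact Finset.sum_congr rfl fun j _ => by rw [zero_mul, zpow_zero, mul_one]
  exact_mod_cast this

lemma core_eq (hN : 1 ≤ N) :
    ∑ j ∈ Icc (-N + 1) N, (wit N j - wit N (j - 1)) ^ 2
      = 4 * Real.sin (Real.pi / (2 * N)) ^ 2 * ∑ j ∈ Icc (-N + 1) N, (wit N j) ^ 2 := by
  have hN0 : (N : ℝ) ≠ 0 := by exact_mod_cast (by omega : N ≠ 0)
  set w := wit N with hw
  set d : ℤ → ℝ := fun j => w j - w (j - 1) with hd
  have hFd : ∀ k : ℤ, Complex.normSq (Ft N d k)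
      = 4 * Real.sin (k * Real.pi / (2 * N)) ^ 2 * Complex.normSq (Ft N w k) := by
    intro k
    rw [hd, Ft_diff hN w (wit_per hN) k, Complex.normSq_mul, normSq_one_sub_om hN k]
  have pointwise : ∀ k ∈ Icc (-N + 1) N, Complex.normSq (Ft N d k)
      = 4 * Real.sin (Real.pi / (2 * N)) ^ 2 * Complex.normSq (Ft N w k) := by
    intro k hk
    simp only [Finset.mem_Icc] at hk
    rw [hFd k]
    by_cases e1 : k = 1
    · subst e1; norm_num
    · by_cases e2 : k = -1
      · subst e2
        congr 2
        push_cast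
        rw [show (-1 : ℝ) * Real.pi / (2 * N) = -(Real.pi / (2 * N)) by ring, Real.sin_neg]
        ring
      · rw [hw, Ft_wit_zero hN hk.1 hk.2 e1 e2]
        simp
  have pd := parseval hN d
  have pv := parseval hN w
  have sums : ∑ k ∈ Icc (-N + 1) N, Complex.normSq (Ft N d k)
      = 4 * Real.sin (Real.pi / (2 * N)) ^ 2 *
        ∑ k ∈ Icc (-N + 1) N, Complex.normSq (Ft N w k) := by
    rw [Finset.sum_congr rfl pointwise, Finset.mul_sum]
  rw [pd, pv] at sums
  have h2N : (2 * (N:ℝ)) ≠ 0 := by positivity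
  refine mul_left_cancel₀ h2N ?_
  rw [sums]
  ring

end DTD

/-- The smallest eigenvalue of `DᵀD` on mean-zero 2N-periodic sequences is
`(2 sin(πh/2)/h)²`: the quadratic form bound holds for all such sequences, and
it is attained by some nonzero mean-zero periodic sequence. -/
theorem smallest_eigenvalue_DTD (N : ℤ) (hN : 1 ≤ N) (h : ℝ) (hh : h = 1 / (N : ℝ)) :
    (∀ v : ℤ → ℝ, (∀ j : ℤ, v (j + 2 * N) = v j) →
      (∑ j ∈ Finset.Icc (-N + 1) N, v j = 0) →
      h * ∑ j ∈ Finset.Icc (-N + 1) N, ((v j - v (j - 1)) / h) ^ 2 ≥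
        (2 * Real.sin (Real.pi * h / 2) / h) ^ 2 *
          (h * ∑ j ∈ Finset.Icc (-N + 1) N, (v j) ^ 2)) ∧
    (∃ v : ℤ → ℝ, (∀ j : ℤ, v (j + 2 * N) = v j) ∧
      (∑ j ∈ Finset.Icc (-N + 1) N, v j = 0) ∧ (∃ j : ℤ, v j ≠ 0) ∧
      h * ∑ j ∈ Finset.Icc (-N + 1) N, ((v j - v (j - 1)) / h) ^ 2 =
        (2 * Real.sin (Real.pi * h / 2) / h) ^ 2 *
          (h * ∑ j ∈ Finset.Icc (-N + 1) N, (v j) ^ 2)) := by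
  have hNpos : (0 : ℝ) < N := by exact_mod_cast (by omega : (0:ℤ) < N)
  have hpos : 0 < h := by rw [hh]; positivity
  have hne : h ≠ 0 := ne_of_gt hpos
  have harg : Real.pi * h / 2 = Real.pi / (2 * N) := by
    rw [hh]
    field_simp
  have hsum : ∀ v : ℤ → ℝ, ∑ j ∈ Finset.Icc (-N + 1) N, ((v j - v (j - 1)) / h) ^ 2
      = (∑ j ∈ Finset.Icc (-N + 1) N, (v j - v (j - 1)) ^ 2) / h ^ 2 := by
    intro v
    rw [Finset.sum_div]
    exact Finset.sum_congr rfl fun j _ => div_pow _ _ _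
  constructor
  · intro v hv hmean
    rw [ge_iff_le, harg, hsum]
    have key := DTD.core_ineq hN v hv hmean
    calc (2 * Real.sin (Real.pi / (2 * N)) / h) ^ 2 *
          (h * ∑ j ∈ Finset.Icc (-N + 1) N, (v j) ^ 2)
        = (4 * Real.sin (Real.pi / (2 * N)) ^ 2 *
            ∑ j ∈ Finset.Icc (-N + 1) N, (v j) ^ 2) / h := by
          field_simp
          ring
      _ ≤ (∑ j ∈ Finset.Icc (-N + 1) N, (v j - v (j - 1)) ^ 2) / h := by
          gcongr
      _ = h * ((∑ j ∈ Finset.Icc (-N + 1) N, (v j - v (j - 1)) ^ 2) / h ^ 2) := by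
          field_simp
  · refine ⟨DTD.wit N, DTD.wit_per hN, DTD.wit_mean hN, ⟨0, ?_⟩, ?_⟩
    · simp [DTD.wit]
    · rw [harg, hsum, DTD.core_eq hN]
      field_simp
      ring
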